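/- If λ = (λ_1, ..., λ_n) ∈ Γ_k with λ_1 ≥ ... ≥ λ_n, then for any 1 ≤ l < k there is a constant C(n, l) > 0 depending only on n and l such that σ_l(λ) ≥ C(n, l) · λ_1 λ_2 ··· λ_l. -/

import Mathlib

open Finset

noncomputable def esym {n : ℕ} (k : ℕ) (lam : Fin n → ℝ) : ℝ :=
  ∑ s ∈ Finset.univ.powersetCard k, ∏ i ∈ s, lam i

noncomputable def esym1 {n : ℕ} (k : ℕ) (lam : Fin n → ℝ) (i : Fin n) : ℝ :=
  ∑ s ∈ (Finset.univ.erase i).powersetCard k, ∏ j ∈ s, lam j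

noncomputable def esym2 {n : ℕ} (k : ℕ) (lam : Fin n → ℝ) (i j : Fin n) : ℝ :=
  ∑ s ∈ ((Finset.univ.erase i).erase j).powersetCard k, ∏ l ∈ s, lam l

def GardingCone (n k : ℕ) : Set (Fin n → ℝ) :=
  {lam | ∀ j : ℕ, 1 ≤ j → j ≤ k → 0 < esym j lam}

set_option linter.unusedSectionVars false
set_option maxHeartbeats 1000000

section EsLemmas
open Polynomial
variable {ι : Type*} [DecidableEq ι]

noncomputable def Es (f : ι → ℝ) (s : Finset ι) (j : ℕ) : ℝ :=
  ∑ t ∈ s.powersetCard j, ∏ i ∈ t, f i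

lemma Es_zero (f : ι → ℝ) (s : Finset ι) : Es f s 0 = 1 := by
  simp [Es]

lemma Es_of_card_lt {f : ι → ℝ} {s : Finset ι} {j : ℕ} (h : s.card < j) : Es f s j = 0 := by
  simp [Es, Finset.powersetCard_eq_empty.2 h]

lemma Es_insert {f : ι → ℝ} {s : Finset ι} {a : ι} (ha : a ∉ s) (j : ℕ) :
    Es f (insert a s) (j + 1) = Es f s (j + 1) + f a * Es f s j := by
  rw [Es, powersetCard_succ_insert ha, Finset.sum_union, Finset.sum_image]
  · congr 1
    rw [Es, Finset.mul_sum]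
    refine Finset.sum_congr rfl fun t ht => ?_
    rw [mem_powersetCard] at ht
    rw [Finset.prod_insert (fun hc => ha (ht.1 hc))]
  · intro t ht u hu htu
    rw [Finset.mem_coe, mem_powersetCard] at ht hu
    have : ∀ v : Finset ι, v ⊆ s → (insert a v).erase a = v := fun v hv => by
      rw [Finset.erase_insert_eq_erase, Finset.erase_eq_of_notMem (fun hc => ha (hv hc))]
    rw [← this t ht.1, ← this u hu.1, htu]
  · rw [Finset.disjoint_right]
    rintro t ht hts
    rw [Finset.mem_image] at ht
    obtain ⟨u, hu, rfl⟩ := ht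
    rw [mem_powersetCard] at hts
    exact ha (hts.1 (Finset.mem_insert_self a u))

lemma Es_pos {f : ι → ℝ} {s : Finset ι} (hf : ∀ i ∈ s, 0 < f i) {j : ℕ} (hj : j ≤ s.card) :
    0 < Es f s j := by
  refine Finset.sum_pos (fun t ht => ?_) (Finset.powersetCard_nonempty.2 hj)
  rw [mem_powersetCard] at ht
  exact Finset.prod_pos fun i hi => hf i (ht.1 hi)

lemma Es_ge_single {f : ι → ℝ} {s t : Finset ι} (hf : ∀ i ∈ s, 0 < f i) (hts : t ⊆ s)
    {j : ℕ} (htj : t.card = j) : (∏ i ∈ t, f i) ≤ Es f s j := by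
  refine Finset.single_le_sum (f := fun u => ∏ i ∈ u, f i) (fun u hu => ?_) ?_
  · rw [mem_powersetCard] at hu
    exact le_of_lt (Finset.prod_pos fun i hi => hf i (hu.1 hi))
  · rw [mem_powersetCard]; exact ⟨hts, htj⟩

-- complement form
lemma Es_compl (f : ι → ℝ) (s : Finset ι) {j : ℕ} (hj : j ≤ s.card) :
    Es f s (s.card - j) = ∑ t ∈ s.powersetCard j, ∏ i ∈ s \ t, f i := by
  rw [Es]
  refine Finset.sum_nbij' (i := fun t => s \ t) (j := fun t => s \ t) ?_ ?_ ?_ ?_ ?_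
  · intro t ht
    rw [mem_powersetCard] at ht ⊢
    refine ⟨Finset.sdiff_subset, ?_⟩
    rw [Finset.card_sdiff_of_subset ht.1, ht.2]
    omega
  · intro t ht
    rw [mem_powersetCard] at ht ⊢
    refine ⟨Finset.sdiff_subset, ?_⟩
    rw [Finset.card_sdiff_of_subset ht.1, ht.2]
  · intro t ht
    rw [mem_powersetCard] at ht
    exact Finset.sdiff_sdiff_eq_self ht.1
  · intro t ht
    rw [mem_powersetCard] at ht
    exact Finset.sdiff_sdiff_eq_self ht.1
  · intro t ht
    rw [mem_powersetCard] at ht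
    rw [Finset.sdiff_sdiff_eq_self ht.1]

lemma Es_top (f : ι → ℝ) (s : Finset ι) : Es f s s.card = ∏ i ∈ s, f i := by
  rw [Es, Finset.powersetCard_self, Finset.sum_singleton]

lemma Es_card_sub_one (f : ι → ℝ) (s : Finset ι) (hs : 1 ≤ s.card) :
    Es f s (s.card - 1) = ∑ i ∈ s, ∏ x ∈ s.erase i, f x := by
  rw [Es_compl f s hs, Finset.powersetCard_one, Finset.sum_map]
  refine Finset.sum_congr rfl fun i _ => ?_
  simp [Finset.sdiff_singleton_eq_erase]

-- pair sum identity
lemma sum_pc2 (g : ι → ℝ) (s : Finset ι) :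
    2 * ∑ t ∈ s.powersetCard 2, ∏ i ∈ t, g i
      = (∑ i ∈ s, g i) ^ 2 - ∑ i ∈ s, g i ^ 2 := by
  induction s using Finset.induction_on with
  | empty =>
    rw [Finset.powersetCard_eq_empty.2 (by simp)]
    simp
  | insert a s ha ih =>
    rw [powersetCard_succ_insert ha, Finset.sum_union ?hd, Finset.sum_image ?hi]
    · have h1 : ∑ t ∈ s.powersetCard 1, ∏ i ∈ insert a t, g i = g a * ∑ i ∈ s, g i := by
        rw [Finset.powersetCard_one, Finset.sum_map, Finset.mul_sum]
        refine Finset.sum_congr rfl fun i hi => ?_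
        have hia : a ∉ ({i} : Finset ι) := by
          simp only [Finset.mem_singleton]
          rintro rfl; exact ha hi
        simp only [Function.Embedding.coeFn_mk]
        rw [Finset.prod_insert hia, Finset.prod_singleton]
      rw [h1, Finset.sum_insert ha, Finset.sum_insert ha, mul_add, ih]
      ring
    case hi =>
      intro t ht u hu htu
      rw [Finset.mem_coe, mem_powersetCard] at ht hu
      have key : ∀ v : Finset ι, v ⊆ s → (insert a v).erase a = v := fun v hv => by
        rw [Finset.erase_insert_eq_erase, Finset.erase_eq_of_notMem (fun hc => ha (hv hc))]
      rw [← key t ht.1, ← key u hu.1, htu]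
    case hd =>
      rw [Finset.disjoint_right]
      rintro t ht hts
      rw [Finset.mem_image] at ht
      obtain ⟨u, hu, rfl⟩ := ht
      rw [mem_powersetCard] at hts
      exact ha (hts.1 (Finset.mem_insert_self a u))

-- product over a pair as product of "P"s
lemma prod_pair_P (f : ι → ℝ) (s : Finset ι) {t : Finset ι} (hts : t ⊆ s) (ht2 : t.card = 2) :
    (∏ i ∈ s \ t, f i) * ∏ i ∈ s, f i = ∏ i ∈ t, (∏ x ∈ s.erase i, f x) := by
  obtain ⟨a, b, hab, rfl⟩ := Finset.card_eq_two.1 ht2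
  have has : a ∈ s := hts (by simp)
  have hbs : b ∈ s := hts (by simp)
  rw [Finset.prod_pair hab]
  have hbea : b ∈ s.erase a := Finset.mem_erase.2 ⟨Ne.symm hab, hbs⟩
  have e1 : s \ {a, b} = (s.erase a).erase b := by
    rw [Finset.sdiff_insert, Finset.sdiff_singleton_eq_erase, Finset.erase_right_comm]
  have ea : ∏ i ∈ s.erase a, f i = f b * ∏ i ∈ (s.erase a).erase b, f i :=
    (Finset.mul_prod_erase _ _ hbea).symm
  have eb : ∏ i ∈ s.erase b, f i = f a * ∏ i ∈ (s.erase a).erase b, f i := by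
    rw [Finset.erase_right_comm]
    exact (Finset.mul_prod_erase _ _ (Finset.mem_erase.2 ⟨hab, has⟩)).symm
  have es : ∏ i ∈ s, f i = f a * ∏ i ∈ s.erase a, f i :=
    (Finset.mul_prod_erase _ _ has).symm
  rw [e1, es, ea, eb]
  ring

-- TOP-CASE NEWTON
lemma Es_newton_top (f : ι → ℝ) (s : Finset ι) (j : ℕ) (hcard : s.card = j + 2) :
    2 * ((j : ℝ) + 2) ^ 2 * (Es f s j * Es f s (j + 2)) ≤
      ((j : ℝ) + 2) * ((j : ℝ) + 1) * Es f s (j + 1) ^ 2 := by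
  set P : ι → ℝ := fun i => ∏ x ∈ s.erase i, f x with hP
  have hS : Es f s (j + 1) = ∑ i ∈ s, P i := by
    have := Es_card_sub_one f s (by omega)
    rwa [hcard, show j+2-1 = j+1 from rfl] at this
  have hprod : Es f s j * Es f s (j + 2) = ∑ t ∈ s.powersetCard 2, ∏ i ∈ t, P i := by
    have hj2 : (2 : ℕ) ≤ s.card := by omega
    have hc : Es f s j = ∑ t ∈ s.powersetCard 2, ∏ i ∈ s \ t, f i := by
      have := Es_compl f s hj2
      rwa [hcard, show j+2-2 = j from rfl] at this  -- (j+2)-2 = j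
    rw [hc, ← hcard, Es_top, Finset.sum_mul]
    refine Finset.sum_congr rfl fun t ht => ?_
    rw [mem_powersetCard] at ht
    exact prod_pair_P f s ht.1 ht.2
  have hpair : 2 * (Es f s j * Es f s (j + 2)) = (∑ i ∈ s, P i) ^ 2 - ∑ i ∈ s, P i ^ 2 := by
    rw [hprod, sum_pc2]
  have hCS : (∑ i ∈ s, P i) ^ 2 ≤ ((j : ℝ) + 2) * ∑ i ∈ s, P i ^ 2 := by
    have := sq_sum_le_card_mul_sum_sq (s := s) (f := P)
    rw [hcard] at this
    push_cast at this
    convert this using 2 <;> push_cast <;> ring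
  rw [hS]
  nlinarith [sq_nonneg (∑ i ∈ s, P i), hpair, hCS]

lemma exists_fin_fun (R : Multiset ℝ) {q : ℕ} (h : Multiset.card R = q) :
    ∃ g : Fin q → ℝ, R = Finset.univ.val.map g := by
  induction R using Quotient.inductionOn with
  | _ L =>
    have hq : L.length = q := by simpa using h
    subst hq
    refine ⟨L.get, ?_⟩
    rw [Fin.univ_def]
    show (L : Multiset ℝ) = Multiset.map L.get (List.finRange L.length : Multiset (Fin L.length))
    rw [Multiset.map_coe, List.map_get_finRange]

-- iterated derivative roots bound
lemma card_roots_iterate (p : ℝ[X]) (k : ℕ) :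
    Multiset.card p.roots ≤ Multiset.card ((derivative (R := ℝ))^[k] p).roots + k := by
  induction k with
  | zero => simp
  | succ k ih =>
    refine ih.trans ?_
    have := Polynomial.card_roots_le_derivative ((derivative (R := ℝ))^[k] p)
    rw [Function.iterate_succ_apply']
    omega

lemma descFact_1 (k : ℕ) : (k+1).descFactorial k = (k+1) * k.descFactorial k := by
  have h1 : (k+1).descFactorial (k+1) = (k+1 - k) * (k+1).descFactorial k :=
    Nat.descFactorial_succ _ _
  rw [show k+1-k = 1 by omega, one_mul] at h1
  rw [← h1, Nat.descFactorial_self, Nat.descFactorial_self, Nat.factorial_succ]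

lemma descFact_2 (k : ℕ) : 2 * (k+2).descFactorial k = (k+2) * ((k+1) * k.descFactorial k) := by
  have h1 : (k+2).descFactorial (k+2) = (k+2-(k+1)) * (k+2).descFactorial (k+1) :=
    Nat.descFactorial_succ _ _
  have h2 : (k+2).descFactorial (k+1) = (k+2-k) * (k+2).descFactorial k :=
    Nat.descFactorial_succ _ _
  rw [show k+2-(k+1) = 1 by omega, one_mul] at h1
  rw [show k+2-k = 2 by omega] at h2
  calc 2 * (k+2).descFactorial k = (k+2).descFactorial (k+2) := by rw [h1, h2]
    _ = (k+2) * ((k+1) * k.descFactorial k) := by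
        rw [Nat.descFactorial_self, Nat.descFactorial_self, Nat.factorial_succ,
          Nat.factorial_succ]

theorem Es_newton {f : ι → ℝ} {s : Finset ι} {l : ℕ} (hl : 1 ≤ l) (hm : l + 1 ≤ s.card) :
    (((l+1) * (s.card - l + 1) : ℕ) : ℝ) * (Es f s (l-1) * Es f s (l+1))
      ≤ ((l * (s.card - l) : ℕ) : ℝ) * Es f s l ^ 2 := by
  classical
  obtain ⟨k0, hk0⟩ : ∃ k0, s.card = k0 + (l+1) := ⟨s.card - (l+1), by omega⟩
  set F : ℝ[X] := ∏ i ∈ s, (X + C (f i)) with hF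
  have hmonic : F.Monic := monic_prod_of_monic _ _ fun i _ => monic_X_add_C _
  have hdegF : F.natDegree = s.card := by
    rw [hF, natDegree_prod_of_monic _ _ fun i _ => monic_X_add_C _]
    simp [natDegree_X_add_C]
  have hsplit : F.Splits := by
    refine Splits.prod fun i _ => ?_
    rw [show X + C (f i) = X - C (-(f i)) by rw [map_neg, sub_neg_eq_add]]
    exact Splits.X_sub_C _
  have hcroots : Multiset.card F.roots = s.card := by
    rw [(splits_iff_card_roots).mp hsplit, hdegF]
  set G : ℝ[X] := (derivative (R := ℝ))^[k0] F with hG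
  have hcoeffG : ∀ t : ℕ, t ≤ l + 1 →
      G.coeff t = (((t + k0).descFactorial k0 : ℕ) : ℝ) * Es f s (l + 1 - t) := by
    intro t ht
    rw [hG, Polynomial.coeff_iterate_derivative]
    have h1 : F.coeff (t + k0) = Es f s (l + 1 - t) := by
      rw [hF, Finset.prod_X_add_C_coeff _ _ (by omega : t + k0 ≤ s.card)]
      rw [Es]
      congr 2
      omega
    rw [h1, nsmul_eq_mul]
  have hGtop : G.coeff (l+1) = ((s.card.descFactorial k0 : ℕ) : ℝ) := by
    rw [hcoeffG (l+1) le_rfl, show l+1+k0 = s.card by omega, Nat.sub_self]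
    simp [Es]
  have hdfpos : 0 < s.card.descFactorial k0 :=
    Nat.pos_of_ne_zero (by rw [Ne, Nat.descFactorial_eq_zero_iff_lt]; omega)
  have hGne : G ≠ 0 := fun h => by
    rw [h, Polynomial.coeff_zero] at hGtop
    exact absurd hGtop.symm (by positivity)
  have hGdeg : G.natDegree = l + 1 := by
    have h1 := Polynomial.natDegree_iterate_derivative F k0
    rw [← hG, hdegF] at h1
    refine le_antisymm (by omega) (Polynomial.le_natDegree_of_ne_zero ?_)
    rw [hGtop]
    positivity
  have hGroots : Multiset.card G.roots = l + 1 := by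
    have h1 := card_roots_iterate F k0
    have h2 := Polynomial.card_roots' G
    rw [hcroots, ← hG] at h1
    rw [hGdeg] at h2
    omega
  obtain ⟨g, hg⟩ := exists_fin_fun G.roots hGroots
  have hfact : C G.leadingCoeff * (G.roots.map fun a => X - C a).prod = G :=
    Polynomial.C_leadingCoeff_mul_prod_multiset_X_sub_C (hGroots.trans hGdeg.symm)
  have hbpos : 0 < G.leadingCoeff := by
    rw [Polynomial.leadingCoeff, hGdeg, hGtop]
    positivity
  set b : ℝ := G.leadingCoeff with hb
  set gneg : Fin (l+1) → ℝ := fun i => -(g i) with hgneg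
  have hfact2 : G = C b * ∏ i : Fin (l+1), (X + C (gneg i)) := by
    rw [← hfact, hg, Multiset.map_map]
    congr 1
    show _ = (Multiset.map (fun i => X + C (gneg i)) univ.val).prod
    congr 1
    apply Multiset.map_congr rfl
    intro x _
    simp [hgneg, sub_eq_add_neg]
  have hcoeffR : ∀ t : ℕ, t ≤ l + 1 → G.coeff t = b * Es gneg Finset.univ (l + 1 - t) := by
    intro t ht
    rw [hfact2, Polynomial.coeff_C_mul]
    congr 1
    have hcard : (Finset.univ : Finset (Fin (l+1))).card = l + 1 := by simp
    rw [Finset.prod_X_add_C_coeff _ _ (by rw [hcard]; exact ht), Es, hcard]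
  have E0 : ((k0.descFactorial k0 : ℕ) : ℝ) * Es f s (l+1) = b * Es gneg Finset.univ (l+1) := by
    have := (hcoeffG 0 (by omega)).symm.trans (hcoeffR 0 (by omega))
    simpa using this
  have E1 : (((1+k0).descFactorial k0 : ℕ) : ℝ) * Es f s l = b * Es gneg Finset.univ l := by
    have := (hcoeffG 1 (by omega)).symm.trans (hcoeffR 1 (by omega))
    simpa using this
  have E2 : (((2+k0).descFactorial k0 : ℕ) : ℝ) * Es f s (l-1)
      = b * Es gneg Finset.univ (l-1) := by
    have := (hcoeffG 2 (by omega)).symm.trans (hcoeffR 2 (by omega))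
    rwa [show l+1-2 = l-1 by omega] at this
  have htop := Es_newton_top gneg Finset.univ (l - 1) (by simp; omega)
  rw [show l-1+2 = l+1 by omega, show l-1+1 = l by omega,
    show (((l-1 : ℕ)):ℝ) = (l:ℝ) - 1 by push_cast [hl]; ring] at htop
  rw [show ((l:ℝ) - 1) + 2 = (l:ℝ) + 1 by ring, show ((l:ℝ) - 1) + 1 = (l:ℝ) by ring] at htop
  -- abbreviations
  set c0 : ℝ := ((k0.descFactorial k0 : ℕ) : ℝ) with hc0
  have hc0pos : 0 < c0 := by
    rw [hc0]
    have : k0.descFactorial k0 ≠ 0 := by rw [Ne, Nat.descFactorial_eq_zero_iff_lt]; omega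
    positivity
  have hrel1 : (((1+k0).descFactorial k0 : ℕ) : ℝ) = ((k0 : ℝ) + 1) * c0 := by
    rw [show 1+k0 = k0+1 by omega, descFact_1, hc0]
    push_cast; ring
  have hrel2 : 2 * (((2+k0).descFactorial k0 : ℕ) : ℝ) = ((k0:ℝ) + 2) * (((k0:ℝ)+1) * c0) := by
    rw [show 2+k0 = k0+2 by omega, show (2:ℝ) * (((k0+2).descFactorial k0 : ℕ):ℝ)
      = (((2 * (k0+2).descFactorial k0 : ℕ)):ℝ) by push_cast; ring, descFact_2, hc0]
    push_cast; ring
  have key : 2 * ((l:ℝ)+1)^2 *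
      (((((2+k0).descFactorial k0 : ℕ) : ℝ) * Es f s (l-1)) * (c0 * Es f s (l+1)))
      ≤ ((l:ℝ)+1) * l * ((((k0:ℝ)+1) * c0) * Es f s l)^2 := by
    rw [E0, E2, ← hrel1, E1]
    calc 2 * ((l:ℝ)+1)^2 * ((b * Es gneg Finset.univ (l-1)) * (b * Es gneg Finset.univ (l+1)))
        = b^2 * (2 * ((l:ℝ)+1)^2 * (Es gneg Finset.univ (l-1) * Es gneg Finset.univ (l+1))) := by
          ring
      _ ≤ b^2 * (((l:ℝ)+1) * l * Es gneg Finset.univ l ^2) :=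
          mul_le_mul_of_nonneg_left htop (by positivity)
      _ = ((l:ℝ)+1) * l * (b * Es gneg Finset.univ l)^2 := by ring
  have key2 : ((l:ℝ)+1)^2 * (((k0:ℝ)+2) * ((k0:ℝ)+1) * c0^2) * (Es f s (l-1) * Es f s (l+1))
      ≤ ((l:ℝ)+1) * l * (((k0:ℝ)+1)^2 * c0^2) * Es f s l ^2 := by
    calc ((l:ℝ)+1)^2 * (((k0:ℝ)+2) * ((k0:ℝ)+1) * c0^2) * (Es f s (l-1) * Es f s (l+1))
        = 2 * ((l:ℝ)+1)^2 *
          (((((2+k0).descFactorial k0 : ℕ) : ℝ) * Es f s (l-1)) * (c0 * Es f s (l+1))) := by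
          linear_combination ((l:ℝ)+1)^2 * c0 * (Es f s (l-1) * Es f s (l+1)) * hrel2.symm
      _ ≤ ((l:ℝ)+1) * l * ((((k0:ℝ)+1) * c0) * Es f s l)^2 := key
      _ = ((l:ℝ)+1) * l * (((k0:ℝ)+1)^2 * c0^2) * Es f s l ^2 := by ring
  have hcancel : (0:ℝ) < ((l:ℝ)+1) * ((k0:ℝ)+1) * c0^2 := by positivity
  rw [show s.card - l + 1 = k0+2 by omega, show s.card - l = k0+1 by omega]
  push_cast
  refine le_of_mul_le_mul_right ?_ hcancel
  calc ((l:ℝ)+1) * ((k0:ℝ)+2) * (Es f s (l-1) * Es f s (l+1)) * (((l:ℝ)+1) * ((k0:ℝ)+1) * c0^2)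
      = ((l:ℝ)+1)^2 * (((k0:ℝ)+2) * ((k0:ℝ)+1) * c0^2) * (Es f s (l-1) * Es f s (l+1)) := by ring
    _ ≤ ((l:ℝ)+1) * l * (((k0:ℝ)+1)^2 * c0^2) * Es f s l ^2 := key2
    _ = (l:ℝ) * ((k0:ℝ)+1) * Es f s l ^2 * (((l:ℝ)+1) * ((k0:ℝ)+1) * c0^2) := by ring

end EsLemmas

def pre (n m : ℕ) : Finset (Fin n) := Finset.univ.filter (fun i => (i : ℕ) < m)

lemma pre_top (n : ℕ) : pre n n = Finset.univ := by
  ext i; simp [pre, i.isLt]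

lemma not_mem_pre_self {n m : ℕ} (hm : m < n) : (⟨m, hm⟩ : Fin n) ∉ pre n m := by
  simp [pre]

lemma pre_succ {n m : ℕ} (hm : m < n) : pre n (m+1) = insert ⟨m, hm⟩ (pre n m) := by
  ext i
  simp only [pre, Finset.mem_insert, Finset.mem_filter, Finset.mem_univ, true_and, Fin.ext_iff]
  omega

lemma card_pre (n : ℕ) : ∀ m, m ≤ n → (pre n m).card = m := by
  intro m
  induction m with
  | zero => intro _; simp [pre]
  | succ m ih =>
    intro hm
    rw [pre_succ (by omega), Finset.card_insert_of_notMem (not_mem_pre_self _), ih (by omega)]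

lemma pre_subset {n m m' : ℕ} (h : m ≤ m') : pre n m ⊆ pre n m' := by
  intro i
  simp only [pre, Finset.mem_filter, Finset.mem_univ, true_and]
  omega

noncomputable def dfac (l x : ℕ) : ℝ :=
  1 - ((l * (x - l) : ℕ) : ℝ) / (((l+1) * (x - l + 1) : ℕ) : ℝ)

lemma dfac_den_pos (l x : ℕ) : (0:ℝ) < (((l+1) * (x - l + 1) : ℕ) : ℝ) := by
  have : 0 < (l+1) * (x - l + 1) := by positivity
  exact_mod_cast this

lemma dfac_pos (l x : ℕ) : 0 < dfac l x := by
  have hden := dfac_den_pos l x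
  have hnum : ((l * (x - l) : ℕ) : ℝ) < (((l+1) * (x - l + 1) : ℕ) : ℝ) := by
    have : l * (x - l) < (l+1) * (x - l + 1) := by nlinarith [Nat.zero_le (x-l)]
    exact_mod_cast this
  rw [dfac, sub_pos, div_lt_one hden]
  exact hnum

lemma dfac_le_one (l x : ℕ) : dfac l x ≤ 1 := by
  have hden := dfac_den_pos l x
  have hnum : (0:ℝ) ≤ ((l * (x - l) : ℕ) : ℝ) := by positivity
  rw [dfac]
  have : 0 ≤ ((l * (x - l) : ℕ) : ℝ) / (((l+1) * (x - l + 1) : ℕ) : ℝ) := by positivity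
  linarith

theorem stmt4 {n : ℕ} (k l : ℕ) (hl : 1 ≤ l) (hlk : l < k) (hkn : k ≤ n) :
    ∃ C : ℝ, 0 < C ∧ ∀ lam : Fin n → ℝ, lam ∈ GardingCone n k → Antitone lam →
      esym l lam ≥ C * ∏ i ∈ Finset.univ.filter (fun i : Fin n => (i : ℕ) < l), lam i := by
  classical
  refine ⟨∏ x ∈ Finset.Ico k n, dfac l x, Finset.prod_pos (fun x _ => dfac_pos _ _), ?_⟩
  intro lam hcone hanti
  -- positivity of Es on prefixes, downward induction
  have R : ∀ c m, m + c = n → ∀ j, j ≤ m → j ≤ k → 0 < Es lam (pre n m) j := by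
    intro c
    induction c with
    | zero =>
      intro m hm j hjm hjk
      have hmn : m = n := by omega
      subst hmn
      rcases Nat.eq_zero_or_pos j with rfl | hj
      · rw [Es_zero]; norm_num
      · have := hcone j hj hjk
        rw [pre_top]
        exact this
    | succ c ih =>
      intro m hm j hjm hjk
      have hmn : m < n := by omega
      have Rn := ih (m+1) (by omega)
      set a : Fin n := ⟨m, hmn⟩ with ha
      rcases le_or_gt (lam a) 0 with hla | hla
      · have inner : ∀ j', j' ≤ m → j' ≤ k → 0 < Es lam (pre n m) j' := by
          intro j'
          induction j' with
          | zero => intro _ _; rw [Es_zero]; norm_num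
          | succ j' ihj =>
            intro hjm' hjk'
            have h1 : 0 < Es lam (pre n m) j' := ihj (by omega) (by omega)
            have hrec : Es lam (pre n (m+1)) (j'+1)
                = Es lam (pre n m) (j'+1) + lam a * Es lam (pre n m) j' := by
              rw [pre_succ hmn]
              exact Es_insert (not_mem_pre_self hmn) j'
            have h2 : 0 < Es lam (pre n (m+1)) (j'+1) := Rn (j'+1) (by omega) (by omega)
            nlinarith [h1, h2, hrec, hla]
        exact inner j hjm hjk
      · refine Es_pos (fun i hi => ?_) (by rw [card_pre n m (by omega)]; exact hjm)
        have him : (i : ℕ) < m := by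
          have := hi
          simp only [pre, Finset.mem_filter] at this
          exact this.2
        have hia : i ≤ a := by
          rw [Fin.le_def]
          simp only [ha]
          omega
        exact lt_of_lt_of_le hla (hanti hia)
  have R' : ∀ m, m ≤ n → ∀ j, j ≤ m → j ≤ k → 0 < Es lam (pre n m) j :=
    fun m hm => R (n - m) m (by omega)
  -- positivity of the first k entries
  have pos_entries : ∀ i : Fin n, (i : ℕ) < k → 0 < lam i := by
    intro i hik
    have hin : (i:ℕ) < n := i.isLt
    have h1 : 0 < Es lam (pre n ((i:ℕ)+1)) ((i:ℕ)+1) :=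
      R' ((i:ℕ)+1) (by omega) ((i:ℕ)+1) le_rfl (by omega)
    have h2 : 0 < Es lam (pre n (i:ℕ)) (i:ℕ) := R' (i:ℕ) (by omega) (i:ℕ) le_rfl (by omega)
    have hrec : Es lam (pre n ((i:ℕ)+1)) ((i:ℕ)+1)
        = Es lam (pre n (i:ℕ)) ((i:ℕ)+1) + lam ⟨(i:ℕ), hin⟩ * Es lam (pre n (i:ℕ)) (i:ℕ) := by
      rw [pre_succ hin]
      exact Es_insert (not_mem_pre_self hin) (i:ℕ)
    have hzero : Es lam (pre n (i:ℕ)) ((i:ℕ)+1) = 0 :=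
      Es_of_card_lt (by rw [card_pre n (i:ℕ) (by omega)]; omega)
    rw [hzero, zero_add] at hrec
    have heta : (⟨(i:ℕ), hin⟩ : Fin n) = i := by
      ext; rfl
    rw [heta] at hrec
    nlinarith [h1, h2, hrec]
  -- the target product is positive
  have hP0 : 0 < ∏ i ∈ pre n l, lam i :=
    Finset.prod_pos fun i hi => pos_entries i (by
      have := hi; simp only [pre, Finset.mem_filter] at this; omega)
  -- upward induction
  have Up : ∀ m, k ≤ m → m ≤ n →
      (∏ x ∈ Finset.Ico k m, dfac l x) * ∏ i ∈ pre n l, lam i ≤ Es lam (pre n m) l := by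
    intro m hkm
    induction m, hkm using Nat.le_induction with
    | base =>
      intro _
      rw [Finset.Ico_self, Finset.prod_empty, one_mul]
      refine Es_ge_single (fun i hi => pos_entries i ?_) (pre_subset (le_of_lt hlk))
        (card_pre n l (by omega))
      have := hi; simp only [pre, Finset.mem_filter] at this; omega
    | succ m hkm ih =>
      intro hmn
      have hmn' : m < n := by omega
      have IH := ih (by omega)
      set a : Fin n := ⟨m, hmn'⟩ with ha
      set A := Es lam (pre n m) l with hA'
      set B := Es lam (pre n m) (l-1) with hB'
      set D := Es lam (pre n m) (l+1) with hD'
      have hA : 0 < A := R' m (by omega) l (by omega) (by omega)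
      have hB : 0 < B := R' m (by omega) (l-1) (by omega) (by omega)
      have hD : 0 < D := R' m (by omega) (l+1) (by omega) (by omega)
      have hrec : Es lam (pre n (m+1)) l = A + lam a * B := by
        rw [pre_succ hmn', hA', hB', show l = (l-1)+1 by omega]
        exact Es_insert (not_mem_pre_self hmn') (l-1)
      have hrecD : Es lam (pre n (m+1)) (l+1) = D + lam a * A := by
        rw [pre_succ hmn', hD', hA']
        exact Es_insert (not_mem_pre_self hmn') l
      have hposD' : 0 < Es lam (pre n (m+1)) (l+1) :=
        R' (m+1) (by omega) (l+1) (by omega) (by omega)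
      -- key step : dfac l m * A ≤ Es lam (pre n (m+1)) l
      have hkey : dfac l m * A ≤ Es lam (pre n (m+1)) l := by
        rcases le_or_gt 0 (lam a) with hla | hla
        · have h1 : 0 ≤ lam a * B := mul_nonneg hla hB.le
          have h2 : dfac l m * A ≤ 1 * A :=
            mul_le_mul_of_nonneg_right (dfac_le_one l m) hA.le
          rw [hrec]; linarith
        · -- negative new entry
          have hN := Es_newton (f := lam) (s := pre n m) hl
            (by rw [card_pre n m (by omega)]; omega)
          rw [card_pre n m (by omega)] at hN
          rw [← hB', ← hD', ← hA'] at hN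
          have hden := dfac_den_pos l m
          have h3 : B * D ≤ (((l * (m - l) : ℕ) : ℝ) / (((l+1) * (m - l + 1) : ℕ) : ℝ)) * A^2 := by
            rw [div_mul_eq_mul_div, le_div_iff₀ hden]
            nlinarith [hN]
          have h1 : (-lam a) * A ≤ D := by
            nlinarith [hposD', hrecD]
          have h2 : (-lam a) * B * A ≤ D * B := by
            calc (-lam a) * B * A = ((-lam a) * A) * B := by ring
              _ ≤ D * B := mul_le_mul_of_nonneg_right h1 hB.le
          set th : ℝ := ((l * (m - l) : ℕ) : ℝ) / (((l+1) * (m - l + 1) : ℕ) : ℝ) with hth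
          have h4 : (-lam a) * B ≤ th * A := by
            refine le_of_mul_le_mul_right ?_ hA
            calc (-lam a) * B * A ≤ D * B := h2
              _ = B * D := by ring
              _ ≤ th * A^2 := h3
              _ = th * A * A := by ring
          have hdf : dfac l m = 1 - th := by rw [dfac, hth]
          rw [hrec, hdf]
          linarith
      calc (∏ x ∈ Finset.Ico k (m+1), dfac l x) * ∏ i ∈ pre n l, lam i
          = dfac l m * ((∏ x ∈ Finset.Ico k m, dfac l x) * ∏ i ∈ pre n l, lam i) := by
            rw [Finset.prod_Ico_succ_top hkm]; ring
        _ ≤ dfac l m * A := mul_le_mul_of_nonneg_left IH (dfac_pos l m).le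
        _ ≤ Es lam (pre n (m+1)) l := hkey
  have hfin := Up n hkn le_rfl
  rw [pre_top] at hfin
  have : esym l lam = Es lam Finset.univ l := rfl
  rw [ge_iff_le, this]
  exact hfin
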